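/- For every real X ≥ 1 and every integer m ≥ 2, the number of m-full positive integers at most X is O(X^{1/m}), with implicit constant depending only on m. -/

import Mathlib

open Finset

/-- `x` is representable as `u^m * ∏_{r=1}^k v_r^{m+r}`. -/
def mfullRep (m k x : ℕ) : Prop :=
  ∃ u : ℕ, ∃ v : ℕ → ℕ, 0 < u ∧ (∀ r, 0 < v r) ∧
    x = u ^ m * ∏ r ∈ Finset.Icc 1 k, v r ^ (m + r)

lemma exists_mfullRep (m : ℕ) (hm : 2 ≤ m) :
    ∀ x : ℕ, 0 < x → (∀ p : ℕ, p.Prime → p ∣ x → p ^ m ∣ x) → mfullRep m (m - 1) x := by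
  -- strengthen: also track that primes of `u` and the `v r` divide `x`
  suffices H : ∀ x : ℕ, 0 < x → (∀ p : ℕ, p.Prime → p ∣ x → p ^ m ∣ x) →
      ∃ u : ℕ, ∃ v : ℕ → ℕ, 0 < u ∧ (∀ r, 0 < v r) ∧
        (∀ q : ℕ, q.Prime → q ∣ u → q ∣ x) ∧ (∀ r q : ℕ, q.Prime → q ∣ v r → q ∣ x) ∧
        x = u ^ m * ∏ r ∈ Finset.Icc 1 (m - 1), v r ^ (m + r) by
    intro x hx hfull
    obtain ⟨u, v, hu, hv, _, _, hxe⟩ := H x hx hfull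
    exact ⟨u, v, hu, hv, hxe⟩
  intro x
  induction x using Nat.strong_induction_on with
  | _ x ih =>
    intro hx hfull
    rcases eq_or_lt_of_le (show 1 ≤ x from hx) with h1 | h1
    · -- x = 1
      refine ⟨1, fun _ => 1, one_pos, fun _ => one_pos, ?_, ?_, ?_⟩
      · intro q hq hqu; exact absurd (Nat.dvd_one.mp hqu) hq.ne_one
      · intro r q hq hqu; exact absurd (Nat.dvd_one.mp hqu) hq.ne_one
      · simp [← h1]
    · -- x ≥ 2
      set p := x.minFac with hp_def
      have hp : p.Prime := Nat.minFac_prime (by omega)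
      have hpx : p ∣ x := Nat.minFac_dvd x
      set e := x.factorization p with he_def
      have he : m ≤ e :=
        (Nat.Prime.pow_dvd_iff_le_factorization hp hx.ne').mp (hfull p hp hpx)
      set y := ordCompl[p] x with hy_def
      have hxy : p ^ e * y = x := Nat.ordProj_mul_ordCompl_eq_self x p
      have hpy : ¬ p ∣ y := Nat.not_dvd_ordCompl hp hx.ne'
      have hy0 : 0 < y := Nat.ordCompl_pos p hx.ne'
      have hyx : y < x := by
        have h2 : 2 ≤ p ^ e := by
          calc 2 ≤ p := hp.two_le
          _ ≤ p ^ e := Nat.le_self_pow (by omega) p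
        nlinarith [hy0]
      have hyfull : ∀ q : ℕ, q.Prime → q ∣ y → q ^ m ∣ y := by
        intro q hq hqy
        have hqp : q ≠ p := by rintro rfl; exact hpy hqy
        have hqx : q ∣ x := hqy.trans (Nat.ordCompl_dvd x p)
        have hqm : q ^ m ∣ p ^ e * y := hxy ▸ hfull q hq hqx
        have hcop : (q ^ m).Coprime (p ^ e) :=
          Nat.Coprime.pow _ _ ((Nat.coprime_primes hq hp).mpr hqp)
        exact hcop.dvd_of_dvd_mul_left hqm
      obtain ⟨u, v, hu, hv, hup, hvp, hye⟩ := ih y hyx hy0 hyfull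
      have hupx : ∀ q : ℕ, q.Prime → q ∣ u → q ∣ x := fun q hq hqu =>
        (hup q hq hqu).trans (Nat.ordCompl_dvd x p)
      have hvpx : ∀ r q : ℕ, q.Prime → q ∣ v r → q ∣ x := fun r q hq hqv =>
        (hvp r q hq hqv).trans (Nat.ordCompl_dvd x p)
      set s := e % m with hs_def
      set q0 := e / m with hq0_def
      have hq01 : 1 ≤ q0 := (Nat.one_le_div_iff (by omega)).mpr he
      have heq : m * q0 + s = e := Nat.div_add_mod e m
      have hsm : s < m := Nat.mod_lt _ (by omega)
      rcases Nat.eq_zero_or_pos s with hs0 | hs0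
      · -- s = 0 : multiply u by p^q0
        refine ⟨u * p ^ q0, v, Nat.mul_pos hu (Nat.pow_pos hp.pos), hv, ?_, hvpx, ?_⟩
        · intro q hq hqu
          rcases (Nat.Prime.dvd_mul hq).mp hqu with h | h
          · exact hupx q hq h
          · have := hq.dvd_of_dvd_pow h
            rwa [(Nat.prime_dvd_prime_iff_eq hq hp).mp this]
        · have hee : e = m * q0 := by omega
          rw [← hxy, hye, hee, mul_pow, ← pow_mul]
          ring
      · -- s ≥ 1 : multiply u by p^(q0-1) and v s by p
        have hsmem : s ∈ Finset.Icc 1 (m - 1) := by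
          simp only [Finset.mem_Icc]; omega
        refine ⟨u * p ^ (q0 - 1), Function.update v s (v s * p),
          Nat.mul_pos hu (Nat.pow_pos hp.pos), ?_, ?_, ?_, ?_⟩
        · intro r
          rcases eq_or_ne r s with rfl | hr
          · simp only [Function.update_self]; exact Nat.mul_pos (hv s) hp.pos
          · simp only [Function.update_of_ne hr]; exact hv r
        · intro q hq hqu
          rcases (Nat.Prime.dvd_mul hq).mp hqu with h | h
          · exact hupx q hq h
          · have := hq.dvd_of_dvd_pow h
            rwa [(Nat.prime_dvd_prime_iff_eq hq hp).mp this]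
        · intro r q hq hqv
          rcases eq_or_ne r s with rfl | hr
          · rw [Function.update_self] at hqv
            rcases (Nat.Prime.dvd_mul hq).mp hqv with h | h
            · exact hvpx _ q hq h
            · rwa [(Nat.prime_dvd_prime_iff_eq hq hp).mp h]
          · rw [Function.update_of_ne hr] at hqv
            exact hvpx r q hq hqv
        · have hprod : ∏ r ∈ Finset.Icc 1 (m - 1), (Function.update v s (v s * p)) r ^ (m + r)
              = (v s * p) ^ (m + s) *
                ∏ r ∈ (Finset.Icc 1 (m - 1)).erase s, v r ^ (m + r) := by
            rw [← Finset.mul_prod_erase _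
              (fun r => (Function.update v s (v s * p)) r ^ (m + r)) hsmem]
            simp only [Function.update_self]
            congr 1
            apply Finset.prod_congr rfl
            intro r hr
            rw [Function.update_of_ne (Finset.ne_of_mem_erase hr)]
          have hprod2 : ∏ r ∈ Finset.Icc 1 (m - 1), v r ^ (m + r)
              = v s ^ (m + s) * ∏ r ∈ (Finset.Icc 1 (m - 1)).erase s, v r ^ (m + r) :=
            (Finset.mul_prod_erase _ _ hsmem).symm
          have hee : e = (q0 - 1) * m + (m + s) := by
            obtain ⟨t, ht⟩ : ∃ t, q0 = t + 1 := ⟨q0 - 1, by omega⟩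
            have h2 : (q0 - 1) * m + (m + s) = m * q0 + s := by
              rw [ht]; simp only [Nat.add_sub_cancel]; ring
            omega
          rw [← hxy, hye, hprod, hprod2, hee, pow_add, mul_pow, ← pow_mul]
          ring

open scoped Classical in
/-- Counting numbers of the form `u^m * ∏ v_r^(m+r)` up to `Y`. -/
lemma mfullRep_count (m : ℕ) (hm : 2 ≤ m) (k : ℕ) :
    ∃ C : ℝ, 0 < C ∧ ∀ Y : ℝ, 0 ≤ Y →
      (((Finset.Icc 1 ⌊Y⌋₊).filter (fun x => mfullRep m k x)).card : ℝ)
        ≤ C * Y ^ ((1 : ℝ) / m) := by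
  have hm0 : (0 : ℝ) < m := by positivity
  induction k with
  | zero =>
    refine ⟨1, one_pos, fun Y hY => ?_⟩
    have hsub : (Finset.Icc 1 ⌊Y⌋₊).filter (fun x => mfullRep m 0 x)
        ⊆ (Finset.Icc 1 ⌊Y ^ ((1:ℝ)/m)⌋₊).image (· ^ m) := by
      intro x hx
      simp only [Finset.mem_filter, Finset.mem_Icc] at hx
      obtain ⟨⟨hx1, hx2⟩, u, v, hu, hv, hxe⟩ := hx
      have : (Finset.Icc 1 0 : Finset ℕ) = ∅ := rfl
      rw [this, Finset.prod_empty, mul_one] at hxe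
      have hxR : (x : ℝ) ≤ Y := le_trans (by exact_mod_cast hx2) (Nat.floor_le hY)
      have huR : (u : ℝ) ≤ Y ^ ((1:ℝ)/m) := by
        have h1 : ((u : ℝ) ^ (m : ℕ)) ≤ Y := by
          rw [hxe] at hxR; exact_mod_cast hxR
        calc (u : ℝ) = ((u : ℝ) ^ (m : ℕ)) ^ ((1:ℝ)/m) := by
              rw [← Real.rpow_natCast (u : ℝ) m, ← Real.rpow_mul (by positivity),
                mul_one_div, div_self (by positivity), Real.rpow_one]
          _ ≤ Y ^ ((1:ℝ)/m) :=
              Real.rpow_le_rpow (by positivity) h1 (by positivity)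
      simp only [Finset.mem_image, Finset.mem_Icc]
      exact ⟨u, ⟨hu, Nat.le_floor huR⟩, hxe.symm⟩
    calc (((Finset.Icc 1 ⌊Y⌋₊).filter (fun x => mfullRep m 0 x)).card : ℝ)
        ≤ (((Finset.Icc 1 ⌊Y ^ ((1:ℝ)/m)⌋₊).image (· ^ m)).card : ℝ) := by
          exact_mod_cast Finset.card_le_card hsub
      _ ≤ ((Finset.Icc 1 ⌊Y ^ ((1:ℝ)/m)⌋₊).card : ℝ) := by
          exact_mod_cast Finset.card_image_le
      _ ≤ (⌊Y ^ ((1:ℝ)/m)⌋₊ : ℝ) := by rw [Nat.card_Icc]; push_cast; simp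
      _ ≤ Y ^ ((1:ℝ)/m) := Nat.floor_le (by positivity)
      _ = 1 * Y ^ ((1:ℝ)/m) := (one_mul _).symm
  | succ k IH =>
    obtain ⟨C, hC, hCb⟩ := IH
    set sE : ℝ := ((m : ℝ) + k + 1) / m with hsE_def
    have hsE1 : 1 < sE := by
      rw [hsE_def, lt_div_iff₀ hm0]; push_cast; linarith
    have hsum : Summable (fun n : ℕ => 1 / (n : ℝ) ^ sE) :=
      Real.summable_one_div_nat_rpow.mpr hsE1
    set Z : ℝ := ∑' n : ℕ, 1 / (n : ℝ) ^ sE with hZ_def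
    have hZ1 : (1 : ℝ) ≤ Z := by
      have h := Summable.le_tsum hsum 1 (fun j _ => by positivity)
      have h1 : (1 : ℝ) / ((1 : ℕ) : ℝ) ^ sE = 1 := by
        simp [Real.one_rpow]
      rw [h1] at h
      exact h
    have hZ0 : 0 < Z := lt_of_lt_of_le one_pos hZ1
    refine ⟨C * Z, by positivity, fun Y hY => ?_⟩
    have hsub : (Finset.Icc 1 ⌊Y⌋₊).filter (fun x => mfullRep m (k + 1) x)
        ⊆ (Finset.Icc 1 ⌊Y⌋₊).biUnion (fun w =>
            ((Finset.Icc 1 ⌊Y / (w : ℝ) ^ (m + (k + 1))⌋₊).filter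
              (fun x => mfullRep m k x)).image (· * w ^ (m + (k + 1)))) := by
      intro x hx
      simp only [Finset.mem_filter, Finset.mem_Icc] at hx
      obtain ⟨⟨hx1, hx2⟩, u, v, hu, hv, hxe⟩ := hx
      set w := v (k + 1) with hw_def
      set y := u ^ m * ∏ r ∈ Finset.Icc 1 k, v r ^ (m + r) with hy_def
      have hxyw : x = y * w ^ (m + (k + 1)) := by
        rw [hxe, Finset.prod_Icc_succ_top (by omega : 1 ≤ k + 1), hy_def, mul_assoc]
      have hy1 : 1 ≤ y := by
        have : 0 < y := by
          rw [hy_def]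
          apply Nat.mul_pos (Nat.pow_pos hu)
          exact Finset.prod_pos (fun r _ => Nat.pow_pos (hv r))
        omega
      have hw1 : 1 ≤ w := hv (k + 1)
      have hxR : (x : ℝ) ≤ Y := le_trans (by exact_mod_cast hx2) (Nat.floor_le hY)
      have hwpow : 0 < (w : ℝ) ^ (m + (k + 1)) := by positivity
      have hyR : (y : ℝ) ≤ Y / (w : ℝ) ^ (m + (k + 1)) := by
        rw [le_div_iff₀ hwpow]
        calc (y : ℝ) * (w : ℝ) ^ (m + (k + 1)) = (x : ℝ) := by
              rw [hxyw]; push_cast; ring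
          _ ≤ Y := hxR
      have hwx : w ≤ ⌊Y⌋₊ := by
        have hwdx : w ∣ x := by
          rw [hxyw]; exact Dvd.dvd.mul_left (dvd_pow_self w (by omega)) y
        exact le_trans (Nat.le_of_dvd (by omega) hwdx) hx2
      simp only [Finset.mem_biUnion, Finset.mem_image, Finset.mem_filter, Finset.mem_Icc]
      refine ⟨w, ⟨hw1, hwx⟩, y, ⟨⟨hy1, Nat.le_floor hyR⟩, u, v, hu, hv, hy_def⟩, hxyw.symm⟩
    have hterm : ∀ w ∈ Finset.Icc 1 ⌊Y⌋₊,
        (C : ℝ) * (Y / (w : ℝ) ^ (m + (k + 1))) ^ ((1:ℝ)/m)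
          ≤ C * Y ^ ((1:ℝ)/m) * (1 / (w : ℝ) ^ sE) := by
      intro w hw
      simp only [Finset.mem_Icc] at hw
      have hw0 : (0 : ℝ) < w := by exact_mod_cast hw.1
      have key : (Y / (w : ℝ) ^ (m + (k + 1))) ^ ((1:ℝ)/m)
          = Y ^ ((1:ℝ)/m) * (1 / (w : ℝ) ^ sE) := by
        rw [Real.div_rpow hY (by positivity)]
        rw [← Real.rpow_natCast (w : ℝ) (m + (k + 1)), ← Real.rpow_mul hw0.le]
        rw [div_eq_mul_one_div]
        congr 2
        rw [hsE_def]; push_cast; ring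
      rw [key, ← mul_assoc]
    calc (((Finset.Icc 1 ⌊Y⌋₊).filter (fun x => mfullRep m (k + 1) x)).card : ℝ)
        ≤ (((Finset.Icc 1 ⌊Y⌋₊).biUnion (fun w =>
            ((Finset.Icc 1 ⌊Y / (w : ℝ) ^ (m + (k + 1))⌋₊).filter
              (fun x => mfullRep m k x)).image (· * w ^ (m + (k + 1))))).card : ℝ) := by
          exact_mod_cast Finset.card_le_card hsub
      _ ≤ ∑ w ∈ Finset.Icc 1 ⌊Y⌋₊,
            ((((Finset.Icc 1 ⌊Y / (w : ℝ) ^ (m + (k + 1))⌋₊).filter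
              (fun x => mfullRep m k x)).image (· * w ^ (m + (k + 1)))).card : ℝ) := by
          exact_mod_cast Finset.card_biUnion_le
      _ ≤ ∑ w ∈ Finset.Icc 1 ⌊Y⌋₊,
            (((Finset.Icc 1 ⌊Y / (w : ℝ) ^ (m + (k + 1))⌋₊).filter
              (fun x => mfullRep m k x)).card : ℝ) := by
          apply Finset.sum_le_sum
          intro w _
          exact_mod_cast Finset.card_image_le
      _ ≤ ∑ w ∈ Finset.Icc 1 ⌊Y⌋₊, C * (Y / (w : ℝ) ^ (m + (k + 1))) ^ ((1:ℝ)/m) := by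
          apply Finset.sum_le_sum
          intro w _
          exact hCb _ (div_nonneg hY (by positivity))
      _ ≤ ∑ w ∈ Finset.Icc 1 ⌊Y⌋₊, C * Y ^ ((1:ℝ)/m) * (1 / (w : ℝ) ^ sE) :=
          Finset.sum_le_sum hterm
      _ = C * Y ^ ((1:ℝ)/m) * ∑ w ∈ Finset.Icc 1 ⌊Y⌋₊, (1 / (w : ℝ) ^ sE) := by
          rw [Finset.mul_sum]
      _ ≤ C * Y ^ ((1:ℝ)/m) * Z := by
          apply mul_le_mul_of_nonneg_left _ (by positivity)
          exact Summable.sum_le_tsum _ (fun i _ => by positivity) hsum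
      _ = C * Z * Y ^ ((1:ℝ)/m) := by ring

/-- The number of `m`-full positive integers up to `X` is `O(X^{1/m})`. -/
theorem count_mfull_le (m : ℕ) (hm : 2 ≤ m) :
    ∃ C : ℝ, 0 < C ∧ ∀ X : ℝ, 1 ≤ X →
      (Nat.card {x : ℕ | 0 < x ∧ (x : ℝ) ≤ X ∧
          ∀ p : ℕ, p.Prime → p ∣ x → p ^ m ∣ x} : ℝ) ≤ C * X ^ ((1 : ℝ) / m) := by
  classical
  obtain ⟨C, hC, hCb⟩ := mfullRep_count m hm (m - 1)
  refine ⟨C, hC, fun X hX => ?_⟩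
  have hX0 : (0 : ℝ) ≤ X := by linarith
  set F := (Finset.Icc 1 ⌊X⌋₊).filter (fun x => mfullRep m (m - 1) x) with hF_def
  have hsub : {x : ℕ | 0 < x ∧ (x : ℝ) ≤ X ∧
      ∀ p : ℕ, p.Prime → p ∣ x → p ^ m ∣ x} ⊆ ↑F := by
    intro x hx
    obtain ⟨hx0, hxX, hfull⟩ := hx
    simp only [hF_def, Finset.coe_filter, Set.mem_setOf_eq, Finset.mem_Icc]
    exact ⟨⟨hx0, Nat.le_floor hxX⟩, exists_mfullRep m hm x hx0 hfull⟩
  have hcard : Nat.card {x : ℕ | 0 < x ∧ (x : ℝ) ≤ X ∧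
      ∀ p : ℕ, p.Prime → p ∣ x → p ^ m ∣ x} ≤ F.card := by
    rw [Nat.card_coe_set_eq]
    calc ({x : ℕ | 0 < x ∧ (x : ℝ) ≤ X ∧
        ∀ p : ℕ, p.Prime → p ∣ x → p ^ m ∣ x}).ncard
        ≤ (↑F : Set ℕ).ncard := Set.ncard_le_ncard hsub (Finset.finite_toSet F)
      _ = F.card := Set.ncard_coe_finset F
  calc (Nat.card {x : ℕ | 0 < x ∧ (x : ℝ) ≤ X ∧
      ∀ p : ℕ, p.Prime → p ∣ x → p ^ m ∣ x} : ℝ)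
      ≤ (F.card : ℝ) := by exact_mod_cast hcard
    _ ≤ C * X ^ ((1 : ℝ) / m) := hCb X hX0
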